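/- arXiv:1007.0508 — 4 statements merged into one kernel-verified Lean document; each statement's English description precedes it below -/
import Mathlib

section
/- Let B be an integral domain of characteristic zero, G a totally ordered abelian group, and deg : B → G ∪ {−∞} a degree function. Let A ⊆ Z be subrings of B such that deg(x) = 0 for all nonzero x ∈ A and all nonzero x ∈ Z. Suppose S is a nonempty subset of Z such that Z is algebraic over the subring A[S] generated by A and S. Then for every A-derivation D : B → B and every z ∈ Z there exists s ∈ S with δ_D(z) ≤ δ_D(s); consequently the set {δ_D(z) : z ∈ Z} has a greatest element if and only if the set {δ_D(s) : s ∈ S} does, and in that case the two greatest elements coincide. -/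
section DegreePrelude

variable {B : Type*} [CommRing B] {G : Type*} [AddCommGroup G] [LinearOrder G] [IsOrderedAddMonoid G]

/-- A degree function on `B` with values in `G ∪ {-∞}` -/
def IsDegreeFunction (deg : B → WithBot G) : Prop :=
  (∀ x : B, deg x = ⊥ ↔ x = 0) ∧
  (∀ x y : B, deg (x * y) = deg x + deg y) ∧
  (∀ x y : B, deg (x + y) ≤ max (deg x) (deg y))

/-- `degDelta deg D x = deg (D x) - deg x` (with value `-∞` if `D x = 0`). -/
noncomputable def degDelta (deg : B → WithBot G) (D : B → B) (x : B) : WithBot G :=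
  (deg (D x)).map fun a => a - WithBot.unbotD 0 (deg x)

/-- The set `{deg (D x) - deg x : x ∈ B \ {0}}`. -/
def degDeltaSet (deg : B → WithBot G) (D : B → B) : Set (WithBot G) :=
  {m | ∃ x : B, x ≠ 0 ∧ degDelta deg D x = m}

/-- `deg (D)` is defined, i.e. the set `{deg (D x) - deg x : x ≠ 0}` has a
greatest element in `G ∪ {-∞}`. -/
def DegreeDefinedAt (deg : B → WithBot G) (D : B → B) : Prop :=
  ∃ M, IsGreatest (degDeltaSet deg D) M

end DegreePrelude

namespace Stmt10Aux

variable {B : Type*} [CommRing B] {D : B → B}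

lemma D0 (hDadd : ∀ x y : B, D (x + y) = D x + D y) : D 0 = 0 := by
  have h := hDadd 0 0
  rw [add_zero] at h
  nth_rewrite 1 [← add_zero (D 0)] at h
  exact (add_left_cancel h).symm

lemma D1 (hDmul : ∀ x y : B, D (x * y) = x * D y + y * D x) : D 1 = 0 := by
  have h := hDmul 1 1
  rw [mul_one, one_mul] at h
  nth_rewrite 1 [← add_zero (D 1)] at h
  exact (add_left_cancel h).symm

lemma Dneg (hDadd : ∀ x y : B, D (x + y) = D x + D y) (x : B) : D (-x) = -(D x) := by
  have h := hDadd x (-x)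
  rw [add_neg_cancel, D0 hDadd] at h
  exact eq_neg_of_add_eq_zero_right h.symm

lemma Dsum (hDadd : ∀ x y : B, D (x + y) = D x + D y) {ι : Type*} (t : Finset ι) (f : ι → B) :
    D (∑ i ∈ t, f i) = ∑ i ∈ t, D (f i) := by
  classical
  induction t using Finset.induction_on with
  | empty => simpa using D0 hDadd
  | insert _ _ h ih => rw [Finset.sum_insert h, Finset.sum_insert h, hDadd, ih]

lemma Dpow (hDmul : ∀ x y : B, D (x * y) = x * D y + y * D x) (z : B) :
    ∀ n : ℕ, D (z ^ n) = (n : B) * z ^ (n - 1) * D z := by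
  intro n
  induction n with
  | zero => simpa using D1 hDmul
  | succ n ih =>
    rw [pow_succ, hDmul, ih]
    cases n with
    | zero => simp
    | succ m =>
      simp only [Nat.add_sub_cancel]
      push_cast
      ring

lemma key_id (hDadd : ∀ x y : B, D (x + y) = D x + D y)
    (hDmul : ∀ x y : B, D (x * y) = x * D y + y * D x) (p : Polynomial B) (z : B) :
    D (Polynomial.eval z p) = (Polynomial.eval z (Polynomial.derivative p)) * D z +
      ∑ i ∈ Finset.range (p.natDegree + 1), z ^ i * D (p.coeff i) := by
  rw [Polynomial.eval_eq_sum_range, Dsum hDadd]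
  have hterm : ∀ i, D (p.coeff i * z ^ i)
      = (p.coeff i * (i : B) * z ^ (i - 1)) * D z + z ^ i * D (p.coeff i) := by
    intro i
    rw [hDmul, Dpow hDmul]
    ring
  rw [Finset.sum_congr rfl fun i _ => hterm i, Finset.sum_add_distrib, ← Finset.sum_mul]
  have hder : Polynomial.eval z (Polynomial.derivative p)
      = ∑ j ∈ Finset.range (p.natDegree + 1), (Polynomial.derivative p).coeff j * z ^ j := by
    refine Polynomial.eval_eq_sum_range' ?_ z
    exact Nat.lt_succ_of_le (le_trans (Polynomial.natDegree_derivative_le p) (Nat.sub_le _ _))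
  have hsum : (∑ i ∈ Finset.range (p.natDegree + 1), p.coeff i * (i : B) * z ^ (i - 1))
      = Polynomial.eval z (Polynomial.derivative p) := by
    rw [hder, Finset.sum_range_succ']
    conv_rhs => rw [Finset.sum_range_succ]
    have hlast : (Polynomial.derivative p).coeff p.natDegree * z ^ p.natDegree = 0 := by
      rw [Polynomial.coeff_derivative, Polynomial.coeff_natDegree_succ_eq_zero]
      simp
    rw [hlast, add_zero]
    have h0 : p.coeff 0 * ((0 : ℕ) : B) * z ^ (0 - 1) = 0 := by simp
    rw [h0, add_zero]
    refine Finset.sum_congr rfl fun j _ => ?_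
    rw [Polynomial.coeff_derivative]
    push_cast
    ring_nf
  rw [hsum]

section Deg

variable {G : Type*} [AddCommGroup G] [LinearOrder G] [IsOrderedAddMonoid G] {deg : B → WithBot G}

lemma deg_zero (hdeg : IsDegreeFunction deg) : deg (0 : B) = ⊥ := (hdeg.1 0).mpr rfl

/-- multiplying by an element of degree ≤ 0 does not increase degree -/
lemma deg_mul_left_le (hdeg : IsDegreeFunction deg) {Z : Subring B}
    (hZ0 : ∀ x ∈ Z, x ≠ 0 → deg x = 0) {x : B} (hx : x ∈ Z) (u : B) :
    deg (x * u) ≤ deg u := by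
  rw [hdeg.2.1]
  by_cases h0 : x = 0
  · rw [h0, deg_zero hdeg]
    simp
  · rw [hZ0 x hx h0, zero_add]

lemma sum_bound (hdeg : IsDegreeFunction deg) {S : Set B} (hSne : S.Nonempty) (D : B → B)
    {ι : Type*} (t : Finset ι) (f : ι → B)
    (h : ∀ i ∈ t, ∃ s ∈ S, deg (f i) ≤ deg (D s)) :
    ∃ s ∈ S, deg (∑ i ∈ t, f i) ≤ deg (D s) := by
  classical
  induction t using Finset.induction_on with
  | empty =>
    obtain ⟨s0, hs0⟩ := hSne
    exact ⟨s0, hs0, by rw [Finset.sum_empty, deg_zero hdeg]; exact bot_le⟩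
  | @insert a t hnot ih =>
    obtain ⟨s1, hs1, h1⟩ := h a (Finset.mem_insert_self _ _)
    obtain ⟨s2, hs2, h2⟩ := ih (fun i hi => h i (Finset.mem_insert_of_mem hi))
    rw [Finset.sum_insert hnot]
    rcases le_total (deg (D s1)) (deg (D s2)) with hle | hle
    · exact ⟨s2, hs2, le_trans (hdeg.2.2 _ _) (max_le (h1.trans hle) h2)⟩
    · exact ⟨s1, hs1, le_trans (hdeg.2.2 _ _) (max_le h1 (h2.trans hle))⟩

lemma closure_bound (hdeg : IsDegreeFunction deg)
    (A Z : Subring B) (hAZ : A ≤ Z)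
    (hZ0 : ∀ x ∈ Z, x ≠ 0 → deg x = 0)
    (S : Set B) (hSne : S.Nonempty) (hSZ : S ⊆ ↑Z)
    (D : B → B)
    (hDadd : ∀ x y : B, D (x + y) = D x + D y)
    (hDmul : ∀ x y : B, D (x * y) = x * D y + y * D x)
    (hDA : ∀ a ∈ A, D a = 0) :
    ∀ c ∈ Subring.closure ((A : Set B) ∪ S), ∃ s ∈ S, deg (D c) ≤ deg (D s) := by
  obtain ⟨s0, hs0⟩ := hSne
  have hR : Subring.closure ((A : Set B) ∪ S) ≤ Z :=
    Subring.closure_le.mpr (Set.union_subset (SetLike.coe_subset_coe.mpr hAZ) hSZ)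
  have hbot : ∀ x : B, D x = 0 → ∃ s ∈ S, deg (D x) ≤ deg (D s) := by
    intro x hx
    exact ⟨s0, hs0, by rw [hx, deg_zero hdeg]; exact bot_le⟩
  have hneg1Z : (-1 : B) ∈ Z := Z.neg_mem Z.one_mem
  intro c hc
  induction hc using Subring.closure_induction with
  | mem x hx =>
    rcases hx with hx | hx
    · exact hbot x (hDA x hx)
    · exact ⟨x, hx, le_rfl⟩
  | zero => exact hbot 0 (D0 hDadd)
  | one => exact hbot 1 (D1 hDmul)
  | add x y hx hy ihx ihy =>
    obtain ⟨s1, hs1, h1⟩ := ihx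
    obtain ⟨s2, hs2, h2⟩ := ihy
    rw [hDadd]
    rcases le_total (deg (D s1)) (deg (D s2)) with hle | hle
    · exact ⟨s2, hs2, le_trans (hdeg.2.2 _ _) (max_le (h1.trans hle) h2)⟩
    · exact ⟨s1, hs1, le_trans (hdeg.2.2 _ _) (max_le h1 (h2.trans hle))⟩
  | neg x hx ihx =>
    obtain ⟨s1, hs1, h1⟩ := ihx
    refine ⟨s1, hs1, ?_⟩
    rw [Dneg hDadd, show -(D x) = (-1 : B) * D x by ring]
    exact le_trans (deg_mul_left_le hdeg hZ0 hneg1Z _) h1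
  | mul x y hx hy ihx ihy =>
    obtain ⟨s1, hs1, h1⟩ := ihx
    obtain ⟨s2, hs2, h2⟩ := ihy
    rw [hDmul]
    have e1 : deg (x * D y) ≤ deg (D s2) :=
      le_trans (deg_mul_left_le hdeg hZ0 (hR hx) _) h2
    have e2 : deg (y * D x) ≤ deg (D s1) :=
      le_trans (deg_mul_left_le hdeg hZ0 (hR hy) _) h1
    rcases le_total (deg (D s1)) (deg (D s2)) with hle | hle
    · exact ⟨s2, hs2, le_trans (hdeg.2.2 _ _) (max_le e1 (e2.trans hle))⟩
    · exact ⟨s1, hs1, le_trans (hdeg.2.2 _ _) (max_le (e1.trans hle) e2)⟩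

lemma main [IsDomain B] [CharZero B] (hdeg : IsDegreeFunction deg)
    (A Z : Subring B) (hAZ : A ≤ Z)
    (hZ0 : ∀ x ∈ Z, x ≠ 0 → deg x = 0)
    (S : Set B) (hSne : S.Nonempty) (hSZ : S ⊆ ↑Z)
    (halg : ∀ z ∈ Z, ∃ p : Polynomial B, p ≠ 0 ∧
      (∀ i : ℕ, p.coeff i ∈ Subring.closure ((A : Set B) ∪ S)) ∧
      Polynomial.eval z p = 0)
    (D : B → B)
    (hDadd : ∀ x y : B, D (x + y) = D x + D y)
    (hDmul : ∀ x y : B, D (x * y) = x * D y + y * D x)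
    (hDA : ∀ a ∈ A, D a = 0)
    (z : B) (hz : z ∈ Z) :
    ∃ s ∈ S, deg (D z) ≤ deg (D s) := by
  obtain ⟨s0, hs0⟩ := hSne
  have hR : Subring.closure ((A : Set B) ∪ S) ≤ Z :=
    Subring.closure_le.mpr (Set.union_subset (SetLike.coe_subset_coe.mpr hAZ) hSZ)
  have hneg1Z : (-1 : B) ∈ Z := Z.neg_mem Z.one_mem
  have key : ∀ n : ℕ, ∀ p : Polynomial B, p.natDegree ≤ n → p ≠ 0 →
      (∀ i : ℕ, p.coeff i ∈ Subring.closure ((A : Set B) ∪ S)) →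
      Polynomial.eval z p = 0 →
      ∃ s ∈ S, deg (D z) ≤ deg (D s) := by
    intro n
    induction n using Nat.strong_induction_on with
    | _ n ih =>
      intro p hpn hp0 hpc hpz
      have hnd : p.natDegree ≠ 0 := by
        intro h0
        have hC := Polynomial.eq_C_of_natDegree_eq_zero h0
        rw [hC] at hpz hp0
        rw [Polynomial.eval_C] at hpz
        exact hp0 (by rw [hpz]; simp)
      have hq0 : Polynomial.derivative p ≠ 0 := fun h =>
        hnd (Polynomial.natDegree_eq_zero_of_derivative_eq_zero h)
      have hqc : ∀ i : ℕ, (Polynomial.derivative p).coeff i ∈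
          Subring.closure ((A : Set B) ∪ S) := by
        intro i
        rw [Polynomial.coeff_derivative]
        exact mul_mem (hpc (i + 1)) (add_mem (natCast_mem _ i) (one_mem _))
      by_cases hqz : Polynomial.eval z (Polynomial.derivative p) = 0
      · exact ih (Polynomial.derivative p).natDegree
          (lt_of_lt_of_le (Polynomial.natDegree_derivative_lt hnd) hpn)
          (Polynomial.derivative p) le_rfl hq0 hqc hqz
      · have hid := key_id hDadd hDmul p z
        rw [hpz, D0 hDadd] at hid
        have hw : Polynomial.eval z (Polynomial.derivative p) * D z
            = (-1 : B) * ∑ i ∈ Finset.range (p.natDegree + 1), z ^ i * D (p.coeff i) := by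
          rw [neg_one_mul]
          exact eq_neg_of_add_eq_zero_left hid.symm
        have hwZ : Polynomial.eval z (Polynomial.derivative p) ∈ Z := by
          rw [Polynomial.eval_eq_sum_range]
          exact Subring.sum_mem _ fun i _ =>
            mul_mem (hR (hqc i)) (Z.pow_mem hz i)
        have hdegw : deg (Polynomial.eval z (Polynomial.derivative p)) = 0 :=
          hZ0 _ hwZ hqz
        have hterms : ∀ i ∈ Finset.range (p.natDegree + 1),
            ∃ s ∈ S, deg (z ^ i * D (p.coeff i)) ≤ deg (D s) := by
          intro i _
          obtain ⟨s, hs, hle⟩ := closure_bound hdeg A Z hAZ hZ0 S ⟨s0, hs0⟩ hSZ D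
            hDadd hDmul hDA (p.coeff i) (hpc i)
          exact ⟨s, hs, le_trans (deg_mul_left_le hdeg hZ0 (Z.pow_mem hz i) _) hle⟩
        obtain ⟨s, hs, hsum⟩ := sum_bound hdeg ⟨s0, hs0⟩ D _ _ hterms
        refine ⟨s, hs, ?_⟩
        have : deg (D z) = deg (Polynomial.eval z (Polynomial.derivative p) * D z) := by
          rw [hdeg.2.1, hdegw, zero_add]
        rw [this, hw]
        exact le_trans (deg_mul_left_le hdeg hZ0 hneg1Z _) hsum
  obtain ⟨p, hp0, hpc, hpz⟩ := halg z hz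
  exact key p.natDegree p le_rfl hp0 hpc hpz

lemma degDelta_eq (hdeg : IsDegreeFunction deg) {Z : Subring B}
    (hZ0 : ∀ x ∈ Z, x ≠ 0 → deg x = 0) (D : B → B) {z : B} (hz : z ∈ Z) :
    degDelta deg D z = deg (D z) := by
  have h : WithBot.unbotD 0 (deg z) = 0 := by
    by_cases hz0 : z = 0
    · rw [hz0, deg_zero hdeg]; rfl
    · rw [hZ0 z hz hz0]; rfl
  unfold degDelta
  rw [h]
  cases hD : deg (D z) with
  | bot => rfl
  | coe a => simp [WithBot.map_coe]

end Deg

end Stmt10Aux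

theorem stmt10 {B : Type*} [CommRing B] [IsDomain B] [CharZero B]
    {G : Type*} [AddCommGroup G] [LinearOrder G] [IsOrderedAddMonoid G]
    (deg : B → WithBot G) (hdeg : IsDegreeFunction deg)
    (A Z : Subring B) (hAZ : A ≤ Z)
    (hZ0 : ∀ x ∈ Z, x ≠ 0 → deg x = 0)
    (S : Set B) (hSne : S.Nonempty) (hSZ : S ⊆ ↑Z)
    -- Z is algebraic over A[S]
    (halg : ∀ z ∈ Z, ∃ p : Polynomial B, p ≠ 0 ∧
      (∀ i : ℕ, p.coeff i ∈ Subring.closure ((A : Set B) ∪ S)) ∧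
      Polynomial.eval z p = 0)
    -- D is an A-derivation of B
    (D : B → B)
    (hDadd : ∀ x y : B, D (x + y) = D x + D y)
    (hDmul : ∀ x y : B, D (x * y) = x * D y + y * D x)
    (hDA : ∀ a ∈ A, D a = 0) :
    (∀ z ∈ Z, ∃ s ∈ S, degDelta deg D z ≤ degDelta deg D s) ∧
    ((∃ M, IsGreatest (degDelta deg D '' ↑Z) M) ↔
      (∃ M, IsGreatest (degDelta deg D '' S) M)) ∧
    (∀ M M', IsGreatest (degDelta deg D '' ↑Z) M →
      IsGreatest (degDelta deg D '' S) M' → M = M') := by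
  have part1 : ∀ z ∈ Z, ∃ s ∈ S, degDelta deg D z ≤ degDelta deg D s := by
    intro z hz
    obtain ⟨s, hs, hle⟩ := Stmt10Aux.main hdeg A Z hAZ hZ0 S hSne hSZ halg D
      hDadd hDmul hDA z hz
    refine ⟨s, hs, ?_⟩
    rwa [Stmt10Aux.degDelta_eq hdeg hZ0 D hz, Stmt10Aux.degDelta_eq hdeg hZ0 D (hSZ hs)]
  have himage : degDelta deg D '' S ⊆ degDelta deg D '' ↑Z := Set.image_mono hSZ
  have conv2 : ∀ M, IsGreatest (degDelta deg D '' S) M → IsGreatest (degDelta deg D '' ↑Z) M := by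
    intro M hM
    refine ⟨himage hM.1, ?_⟩
    rintro m ⟨z, hz, rfl⟩
    obtain ⟨s, hs, hle⟩ := part1 z hz
    exact le_trans hle (hM.2 ⟨s, hs, rfl⟩)
  have conv1 : ∀ M, IsGreatest (degDelta deg D '' ↑Z) M → IsGreatest (degDelta deg D '' S) M := by
    intro M hM
    obtain ⟨z, hz, hzM⟩ := hM.1
    obtain ⟨s, hs, hle⟩ := part1 z hz
    have hsM : degDelta deg D s ≤ M := hM.2 (himage ⟨s, hs, rfl⟩)
    have : degDelta deg D s = M := le_antisymm hsM (hzM ▸ hle)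
    exact ⟨⟨s, hs, this⟩, fun m hm => hM.2 (himage hm)⟩
  refine ⟨part1, ⟨fun ⟨M, h⟩ => ⟨M, conv1 M h⟩, fun ⟨M, h⟩ => ⟨M, conv2 M h⟩⟩, ?_⟩
  intro M M' h h'
  exact IsGreatest.unique h (conv2 M' h')
end

section
/- Let k be a field of characteristic zero, B a finitely generated k-algebra which is an integral domain, and G a totally ordered abelian group. If deg : B → G ∪ {−∞} is the degree function determined by some G-grading of B, then deg is tame over k. More precisely, given any choice of homogeneous elements x₁, …, x_n ∈ B satisfying B = k[x₁, …, x_n], for every k-derivation D : B → B, deg(D) is defined and deg(D) = max{δ_D(x₁), …, δ_D(x_n)}. -/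
section Aux

open DirectSum

set_option linter.unusedSectionVars false

variable {B : Type*} [CommRing B] [IsDomain B] {G : Type*}
  [AddCommGroup G] [LinearOrder G] [IsOrderedAddMonoid G] [DecidableEq G]
  (𝒜 : G → AddSubgroup B) [GradedRing 𝒜] (deg : B → WithBot G)

variable (hbot : ∀ x : B, deg x = ⊥ ↔ x = 0)
variable (hmul : ∀ x y : B, deg (x * y) = deg x + deg y)
variable (hdeg : ∀ x : B, x ≠ 0 → ∀ i : G,
      (deg x ≤ ↑i ↔ ∀ j : G, i < j → (DirectSum.decompose 𝒜 x j : B) = 0))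

omit [IsDomain B] [DecidableEq G] in
lemma aux_exists_coe {x : B} (hx0 : x ≠ 0) (hbot : ∀ x : B, deg x = ⊥ ↔ x = 0) :
    ∃ e : G, deg x = e := by
  cases h : deg x with
  | bot => exact absurd ((hbot x).mp h) hx0
  | coe e => exact ⟨e, rfl⟩

omit [IsDomain B] in
lemma aux_supp_ne {x : B} [∀ (i : G) (z : 𝒜 i), Decidable (z ≠ 0)] (hx0 : x ≠ 0) :
    (DirectSum.decompose 𝒜 x).support.Nonempty := by
  rcases (DirectSum.decompose 𝒜 x).support.eq_empty_or_nonempty with h | h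
  · exfalso
    apply hx0
    have h0 : DirectSum.decompose 𝒜 x = 0 := DFinsupp.support_eq_empty.mp h
    have := congrArg (fun z => ((DirectSum.decompose 𝒜).symm z : B)) h0
    simpa using this
  · exact h

omit [IsDomain B] in
lemma aux_dec_add (u v : B) (p : G) :
    (DirectSum.decompose 𝒜 (u + v) p : B) =
      (DirectSum.decompose 𝒜 u p : B) + (DirectSum.decompose 𝒜 v p : B) := by
  rw [DirectSum.decompose_add, DirectSum.add_apply, AddSubgroup.coe_add]

omit [IsDomain B] in
lemma aux_dec_sum {ι : Type*} (s : Finset ι) (g : ι → B) (p : G) :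
    (DirectSum.decompose 𝒜 (∑ i ∈ s, g i) p : B) =
      ∑ i ∈ s, (DirectSum.decompose 𝒜 (g i) p : B) := by
  classical
  induction s using Finset.cons_induction with
  | empty => simp
  | cons a s ha ih => rw [Finset.sum_cons, Finset.sum_cons, aux_dec_add, ih]

section
include hbot hdeg

lemma aux_deg_of_mem {x : B} {d : G} (hx : x ∈ 𝒜 d) (hx0 : x ≠ 0) : deg x = d := by
  have h1 : deg x ≤ d := (hdeg x hx0 d).mpr
    (fun j hj => DirectSum.decompose_of_mem_ne 𝒜 hx hj.ne)
  obtain ⟨e, he⟩ := aux_exists_coe deg hx0 hbot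
  rcases eq_or_lt_of_le (he ▸ h1 : (e : WithBot G) ≤ d) with h | h
  · rw [he]; exact_mod_cast h
  · exfalso
    have := (hdeg x hx0 e).mp he.le d (by exact_mod_cast h)
    rw [DirectSum.decompose_of_mem_same 𝒜 hx] at this
    exact hx0 this

lemma aux_comp_le_deg {x : B} {j : G} (h : (DirectSum.decompose 𝒜 x j : B) ≠ 0) :
    (j : WithBot G) ≤ deg x := by
  have hx0 : x ≠ 0 := by rintro rfl; simp at h
  obtain ⟨e, he⟩ := aux_exists_coe deg hx0 hbot
  by_contra hc
  rw [he] at hc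
  exact h ((hdeg x hx0 e).mp he.le j (by exact_mod_cast not_le.mp hc))

lemma aux_comp_eq_zero {x : B} {j : G} (h : deg x < (j : WithBot G)) :
    (DirectSum.decompose 𝒜 x j : B) = 0 := by
  by_contra hc
  exact absurd (aux_comp_le_deg 𝒜 deg hbot hdeg hc) (not_le.mpr h)

include hmul in
lemma aux_unit_homog {x y : B} (hxy : x * y = 1) :
    ∃ d : G, deg x = (d : WithBot G) ∧ x ∈ 𝒜 d := by
  classical
  have hx0 : x ≠ 0 := by rintro rfl; simp at hxy
  have hy0 : y ≠ 0 := by rintro rfl; simp at hxy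
  obtain ⟨b, hb⟩ := aux_exists_coe deg hx0 hbot
  obtain ⟨b', hb'⟩ := aux_exists_coe deg hy0 hbot
  have h1 : deg (1 : B) = (0 : G) :=
    aux_deg_of_mem 𝒜 deg hbot hdeg (SetLike.one_mem_graded 𝒜) one_ne_zero
  have hbb' : b + b' = 0 := by
    have := hmul x y
    rw [hxy, h1, hb, hb'] at this
    exact_mod_cast this.symm
  set S := (DirectSum.decompose 𝒜 x).support with hS
  set T := (DirectSum.decompose 𝒜 y).support with hT
  have hSne : S.Nonempty := aux_supp_ne 𝒜 hx0
  have hTne : T.Nonempty := aux_supp_ne 𝒜 hy0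
  set a := S.min' hSne with ha
  set a' := T.min' hTne with ha'
  have hxa : (DirectSum.decompose 𝒜 x a : B) ≠ 0 := by
    simpa using DFinsupp.mem_support_iff.mp (S.min'_mem hSne)
  have hya' : (DirectSum.decompose 𝒜 y a' : B) ≠ 0 := by
    simpa using DFinsupp.mem_support_iff.mp (T.min'_mem hTne)
  have key : (DirectSum.decompose 𝒜 (x * y) (a + a') : B) =
      (DirectSum.decompose 𝒜 x a : B) * (DirectSum.decompose 𝒜 y a' : B) := by
    rw [DirectSum.decompose_mul, DirectSum.coe_mul_apply]
    have hfil : ((S ×ˢ T).filter fun ij : G × G => ij.1 + ij.2 = a + a') = {(a, a')} := by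
      ext ⟨p, q⟩
      simp only [Finset.mem_filter, Finset.mem_product, Finset.mem_singleton, Prod.mk.injEq]
      constructor
      · rintro ⟨⟨hp, hq⟩, hpq⟩
        have h1 : a ≤ p := S.min'_le p hp
        have h2 : a' ≤ q := T.min'_le q hq
        have hpa : p = a := by
          by_contra hne
          have hlt : a < p := lt_of_le_of_ne h1 (Ne.symm hne)
          have hc : a + a' < p + q := add_lt_add_of_lt_of_le hlt h2
          rw [hpq] at hc
          exact lt_irrefl _ hc
        subst hpa
        exact ⟨rfl, add_left_cancel hpq⟩
      · rintro ⟨rfl, rfl⟩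
        exact ⟨⟨S.min'_mem hSne, T.min'_mem hTne⟩, rfl⟩
    rw [hfil, Finset.sum_singleton]
  have hne : (DirectSum.decompose 𝒜 x a : B) * (DirectSum.decompose 𝒜 y a' : B) ≠ 0 :=
    mul_ne_zero hxa hya'
  have haa' : a + a' = 0 := by
    by_contra h
    rw [hxy, DirectSum.decompose_of_mem_ne 𝒜 (SetLike.one_mem_graded 𝒜) (Ne.symm h)] at key
    exact hne key.symm
  have hab : a ≤ b := by
    have := aux_comp_le_deg 𝒜 deg hbot hdeg hxa
    rw [hb] at this; exact_mod_cast this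
  have ha'b' : a' ≤ b' := by
    have := aux_comp_le_deg 𝒜 deg hbot hdeg hya'
    rw [hb'] at this; exact_mod_cast this
  have hba : b ≤ a := by
    have h2 : b + a' ≤ b + b' := add_le_add_right ha'b' b
    rw [hbb', ← haa'] at h2
    exact le_of_add_le_add_right h2
  have hSsing : S = {a} := by
    refine Finset.eq_singleton_iff_unique_mem.mpr ⟨S.min'_mem hSne, fun p hp => ?_⟩
    have h1 : a ≤ p := S.min'_le p hp
    have h2 : p ≤ b := by
      have := aux_comp_le_deg 𝒜 deg hbot hdeg
        (by simpa using DFinsupp.mem_support_iff.mp hp :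
          (DirectSum.decompose 𝒜 x p : B) ≠ 0)
      rw [hb] at this; exact_mod_cast this
    exact le_antisymm (h2.trans hba) h1
  have hxeq : x = (DirectSum.decompose 𝒜 x a : B) := by
    conv_lhs => rw [← DirectSum.sum_support_decompose 𝒜 x]
    rw [← hS, hSsing, Finset.sum_singleton]
  have hamem : x ∈ 𝒜 a := hxeq ▸ (DirectSum.decompose 𝒜 x a).2
  exact ⟨a, by rw [hb, le_antisymm hba hab], hamem⟩

include hmul in
lemma aux_algebraMap_mem {k : Type*} [Field k] [Algebra k B] (c : k) :
    algebraMap k B c ∈ 𝒜 0 := by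
  by_cases hc : c = 0
  · rw [hc, map_zero]; exact zero_mem _
  have hmap0 : ∀ c' : k, c' ≠ 0 → algebraMap k B c' ≠ 0 := fun c' hc' =>
    fun h => hc' ((injective_iff_map_eq_zero _).mp (algebraMap k B).injective c' h)
  obtain ⟨b, hbdeg, hbmem⟩ := aux_unit_homog 𝒜 deg hbot hmul hdeg
    (x := algebraMap k B c) (y := algebraMap k B c⁻¹)
    (by rw [← map_mul, mul_inv_cancel₀ hc, map_one])
  by_cases hb0 : b = 0
  · rwa [hb0] at hbmem
  exfalso
  by_cases h1c : (1 : k) + c = 0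
  · -- c = -1, so algebraMap c = -1 ∈ 𝒜 0
    have hcm1 : c = -1 := by linear_combination h1c
    have hmem0 : algebraMap k B c ∈ 𝒜 0 := by
      rw [hcm1, map_neg, map_one]
      exact neg_mem (SetLike.one_mem_graded 𝒜)
    exact hb0 (DirectSum.degree_eq_of_mem_mem 𝒜 hbmem hmem0 (hmap0 c hc))
  · obtain ⟨h, hhdeg, hhmem⟩ := aux_unit_homog 𝒜 deg hbot hmul hdeg
      (x := algebraMap k B (1 + c)) (y := algebraMap k B (1 + c)⁻¹)
      (by rw [← map_mul, mul_inv_cancel₀ h1c, map_one])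
    have hz : algebraMap k B (1 + c) = 1 + algebraMap k B c := by
      rw [map_add, map_one]
    have hdec0 : (DirectSum.decompose 𝒜 (algebraMap k B (1 + c)) 0 : B) = 1 := by
      rw [hz, aux_dec_add,
        DirectSum.decompose_of_mem_same 𝒜 (SetLike.one_mem_graded 𝒜),
        DirectSum.decompose_of_mem_ne 𝒜 hbmem hb0, add_zero]
    have hh0 : h = 0 := by
      by_contra hh
      rw [DirectSum.decompose_of_mem_ne 𝒜 hhmem hh] at hdec0
      exact one_ne_zero hdec0.symm
    rw [hh0] at hhmem
    have hmem0 : algebraMap k B c ∈ 𝒜 0 := by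
      have : algebraMap k B c = algebraMap k B (1 + c) - 1 := by rw [hz]; ring
      rw [this]
      exact sub_mem hhmem (SetLike.one_mem_graded 𝒜)
    exact hb0 (DirectSum.degree_eq_of_mem_mem 𝒜 hbmem hmem0 (hmap0 c hc))

end
end Aux

section Main

open DirectSum

lemma aux_dec_mul_left {B : Type*} [CommRing B] {G : Type*}
    [AddCommGroup G] [LinearOrder G] [IsOrderedAddMonoid G] [DecidableEq G]
    (𝒜 : G → AddSubgroup B) [GradedRing 𝒜] {z w : B} {q : G} (hz : z ∈ 𝒜 q) (p : G) :
    (DirectSum.decompose 𝒜 (z * w) p : B) = z * (DirectSum.decompose 𝒜 w (p - q) : B) := by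
  have h := DirectSum.coe_decompose_mul_add_of_left_mem 𝒜 (b := w) (j := p - q) hz
  rw [show q + (p - q) = p by abel] at h
  exact h

lemma aux_main {k B G : Type*} [Field k] [CommRing B] [IsDomain B]
    [Algebra k B] [AddCommGroup G] [LinearOrder G] [IsOrderedAddMonoid G] [DecidableEq G]
    (𝒜 : G → AddSubgroup B) [GradedRing 𝒜]
    (deg : B → WithBot G) (hdegfn : IsDegreeFunction deg)
    (hdeg : ∀ x : B, x ≠ 0 → ∀ i : G,
      (deg x ≤ ↑i ↔ ∀ j : G, i < j → (DirectSum.decompose 𝒜 x j : B) = 0))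
    (n : ℕ) (x : Fin n → B) (hx : ∀ i : Fin n, ∃ d : G, x i ∈ 𝒜 d)
    (hadj : Algebra.adjoin k (Set.range x) = ⊤)
    (D : Derivation k B B) :
    IsGreatest (degDeltaSet deg ⇑D)
      (Finset.univ.sup fun i => degDelta deg ⇑D (x i)) := by
  classical
  obtain ⟨hbot, hmul, -⟩ := hdegfn
  have hzero : deg (0 : B) = ⊥ := (hbot 0).mpr rfl
  have hδbot : ∀ z : B, D z = 0 → degDelta deg ⇑D z = ⊥ := by
    intro z hz
    unfold degDelta
    rw [hz, hzero, WithBot.map_bot]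
  have hδcoe : ∀ {z : B} {e f : G}, deg z = e → deg (D z) = f →
      degDelta deg ⇑D z = ((f - e : G) : WithBot G) := by
    intro z e f he hf
    unfold degDelta
    rw [hf, he, WithBot.map_coe, WithBot.unbotD_coe]
  cases hM : (Finset.univ.sup fun i => degDelta deg ⇑D (x i)) with
  | bot =>
    have hDxi : ∀ i, D (x i) = 0 := by
      intro i
      have h1 := Finset.le_sup (f := fun i => degDelta deg ⇑D (x i)) (Finset.mem_univ i)
      rw [hM] at h1
      have h2 : degDelta deg ⇑D (x i) = ⊥ := le_bot_iff.mp h1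
      unfold degDelta at h2
      cases h : deg (D (x i)) with
      | bot => exact (hbot _).mp h
      | coe f => rw [h, WithBot.map_coe] at h2; exact absurd h2 (by simp)
    have hD0 : ∀ b : B, D b = 0 := by
      intro b
      have hb : b ∈ Algebra.adjoin k (Set.range x) := hadj.symm ▸ Algebra.mem_top
      induction hb using Algebra.adjoin_induction with
      | mem z hz => obtain ⟨i, rfl⟩ := hz; exact hDxi i
      | algebraMap c => exact D.map_algebraMap c
      | add u v hu hv ihu ihv => rw [map_add, ihu, ihv, add_zero]
      | mul u v hu hv ihu ihv => rw [D.leibniz, ihu, ihv, smul_zero, smul_zero, add_zero]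
    constructor
    · exact ⟨1, one_ne_zero, hδbot 1 (hD0 1)⟩
    · rintro w ⟨z, hz0, rfl⟩
      rw [hδbot z (hD0 z)]
  | coe m =>
    have hle : ∀ i : Fin n, degDelta deg ⇑D (x i) ≤ (m : WithBot G) := by
      intro i
      have h1 := Finset.le_sup (f := fun i => degDelta deg ⇑D (x i)) (Finset.mem_univ i)
      rw [hM] at h1
      exact h1
    have KL : ∀ b : B, ∀ p j : G, m + p < j →
        (DirectSum.decompose 𝒜 (D (DirectSum.decompose 𝒜 b p : B)) j : B) = 0 := by
      intro b
      have hb : b ∈ Algebra.adjoin k (Set.range x) := hadj.symm ▸ Algebra.mem_top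
      induction hb using Algebra.adjoin_induction with
      | mem z hz =>
        obtain ⟨i, rfl⟩ := hz
        intro p j hj
        obtain ⟨di, hdi⟩ := hx i
        by_cases h0 : x i = 0
        · rw [h0]; simp
        by_cases hp : p = di
        · subst hp
          rw [DirectSum.decompose_of_mem_same 𝒜 hdi]
          by_cases hD0 : D (x i) = 0
          · rw [hD0]; simp
          obtain ⟨f, hf⟩ := aux_exists_coe deg hD0 hbot
          have hdx : deg (x i) = (p : WithBot G) := aux_deg_of_mem 𝒜 deg hbot hdeg hdi h0
          have hδ := hle i
          rw [hδcoe hdx hf] at hδ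
          have hfle : f ≤ m + p := sub_le_iff_le_add.mp (by exact_mod_cast hδ)
          refine aux_comp_eq_zero 𝒜 deg hbot hdeg ?_
          rw [hf]
          exact_mod_cast lt_of_le_of_lt hfle hj
        · rw [DirectSum.decompose_of_mem_ne 𝒜 hdi (fun h => hp h.symm)]; simp
      | algebraMap c =>
        intro p j hj
        by_cases hp : p = 0
        · rw [hp, DirectSum.decompose_of_mem_same 𝒜
            (aux_algebraMap_mem 𝒜 deg hbot hmul hdeg c), D.map_algebraMap]
          simp
        · rw [DirectSum.decompose_of_mem_ne 𝒜
            (aux_algebraMap_mem 𝒜 deg hbot hmul hdeg c) (Ne.symm hp)]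
          simp
      | add u v hu hv ihu ihv =>
        intro p j hj
        rw [aux_dec_add, map_add, aux_dec_add, ihu p j hj, ihv p j hj, add_zero]
      | mul u v hu hv ihu ihv =>
        intro p j hj
        have hdecmul : (DirectSum.decompose 𝒜 (u * v) p : B) =
            ∑ q ∈ (DirectSum.decompose 𝒜 u).support,
              (DirectSum.decompose 𝒜 u q : B) *
                (DirectSum.decompose 𝒜 v (p - q) : B) := by
          conv_lhs => rw [← DirectSum.sum_support_decompose 𝒜 u, Finset.sum_mul]
          rw [aux_dec_sum]
          exact Finset.sum_congr rfl fun q hq =>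
            aux_dec_mul_left 𝒜 (SetLike.coe_mem _) p
        rw [hdecmul, map_sum, aux_dec_sum]
        refine Finset.sum_eq_zero fun q hq => ?_
        rw [D.leibniz, smul_eq_mul, smul_eq_mul, aux_dec_add,
          aux_dec_mul_left 𝒜 (SetLike.coe_mem _) j,
          aux_dec_mul_left 𝒜 (SetLike.coe_mem _) j,
          ihv (p - q) (j - q) (by rw [lt_sub_iff_add_lt, show m + (p - q) + q = m + p by abel]; exact hj),
          ihu q (j - (p - q)) (by rw [lt_sub_iff_add_lt, show m + q + (p - q) = m + p by abel]; exact hj)]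
        simp
    have hub : ∀ z : B, z ≠ 0 → degDelta deg ⇑D z ≤ (m : WithBot G) := by
      intro z hz0
      by_cases hDz : D z = 0
      · rw [hδbot z hDz]; exact bot_le
      obtain ⟨e, he⟩ := aux_exists_coe deg hz0 hbot
      obtain ⟨f, hf⟩ := aux_exists_coe deg hDz hbot
      have hfe : f ≤ e + m := by
        have hDle : deg (D z) ≤ ((e + m : G) : WithBot G) := by
          refine (hdeg (D z) hDz (e + m)).mpr fun j hj => ?_
          have hzs : D z = ∑ p ∈ (DirectSum.decompose 𝒜 z).support,
              D (DirectSum.decompose 𝒜 z p : B) := by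
            conv_lhs => rw [← DirectSum.sum_support_decompose 𝒜 z]
            rw [map_sum]
          rw [hzs, aux_dec_sum]
          refine Finset.sum_eq_zero fun p hp => ?_
          have hple : p ≤ e := by
            have := aux_comp_le_deg 𝒜 deg hbot hdeg
              (by simpa using DFinsupp.mem_support_iff.mp hp)
            rw [he] at this; exact_mod_cast this
          refine KL z p j (lt_of_le_of_lt (add_le_add_right hple m) ?_)
          rw [add_comm m e]
          exact hj
        rw [hf] at hDle
        exact_mod_cast hDle
      rw [hδcoe he hf]
      exact_mod_cast sub_le_iff_le_add'.mpr hfe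
    have hne : (Finset.univ : Finset (Fin n)).Nonempty := by
      rcases Finset.univ.eq_empty_or_nonempty (α := Fin n) with h | h
      · rw [h, Finset.sup_empty] at hM; exact absurd hM (by simp)
      · exact h
    obtain ⟨i0, -, hi0⟩ := Finset.exists_mem_eq_sup Finset.univ hne
      (fun i => degDelta deg ⇑D (x i))
    have hδi0 : degDelta deg ⇑D (x i0) = (m : WithBot G) := by rw [← hi0, hM]
    have hDxi0 : D (x i0) ≠ 0 := by
      intro h; rw [hδbot _ h] at hδi0; exact absurd hδi0 (by simp)
    have hxi0 : x i0 ≠ 0 := by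
      intro h; apply hDxi0; rw [h, map_zero]
    exact ⟨⟨x i0, hxi0, hδi0⟩, by rintro w ⟨z, hz0, rfl⟩; exact hub z hz0⟩

end Main

theorem stmt12 {k B G : Type*} [Field k] [CharZero k] [CommRing B] [IsDomain B]
    [Algebra k B] [Algebra.FiniteType k B]
    [AddCommGroup G] [LinearOrder G] [IsOrderedAddMonoid G] [DecidableEq G]
    (𝒜 : G → AddSubgroup B) [GradedRing 𝒜]
    -- deg is the degree function determined by the grading 𝒜
    (deg : B → WithBot G) (hdegfn : IsDegreeFunction deg)
    (hdeg : ∀ x : B, x ≠ 0 → ∀ i : G,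
      (deg x ≤ ↑i ↔ ∀ j : G, i < j → (DirectSum.decompose 𝒜 x j : B) = 0)) :
    -- deg is tame over k:
    (∀ D : Derivation k B B, DegreeDefinedAt deg ⇑D) ∧
    -- more precisely:
    (∀ (n : ℕ) (x : Fin n → B), (∀ i : Fin n, ∃ d : G, x i ∈ 𝒜 d) →
      Algebra.adjoin k (Set.range x) = ⊤ →
      ∀ D : Derivation k B B,
        IsGreatest (degDeltaSet deg ⇑D)
          (Finset.univ.sup fun i => degDelta deg ⇑D (x i))) := by
  classical
  refine ⟨?_, fun n x hx hadj D => aux_main 𝒜 deg hdegfn hdeg n x hx hadj D⟩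
  intro D
  obtain ⟨s, hs⟩ := (inferInstance : Algebra.FiniteType k B).out
  set T : Finset B := s.biUnion fun y => (DirectSum.decompose 𝒜 y).support.image
      fun p => (DirectSum.decompose 𝒜 y p : B) with hT
  let e := T.equivFin
  set xx : Fin T.card → B := fun i => ((e.symm i : ↥T) : B) with hxx
  have hmemT : ∀ i, xx i ∈ T := fun i => (e.symm i).2
  have hhom : ∀ i, ∃ d : G, xx i ∈ 𝒜 d := by
    intro i
    have hmem : (xx i) ∈ T := hmemT i
    rw [hT] at hmem
    obtain ⟨y, hy, hmem2⟩ := Finset.mem_biUnion.mp hmem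
    obtain ⟨p, hp, hpe⟩ := Finset.mem_image.mp hmem2
    exact ⟨p, hpe ▸ SetLike.coe_mem _⟩
  have hrange : Set.range xx = ↑T := by
    ext z
    constructor
    · rintro ⟨i, rfl⟩; exact hmemT i
    · intro hz
      exact ⟨e ⟨z, hz⟩, by simp [hxx]⟩
  have hadj : Algebra.adjoin k (Set.range xx) = ⊤ := by
    rw [hrange, eq_top_iff, ← hs]
    apply Algebra.adjoin_le
    intro y hy
    have hysum : y = ∑ p ∈ (DirectSum.decompose 𝒜 y).support,
        (DirectSum.decompose 𝒜 y p : B) := (DirectSum.sum_support_decompose 𝒜 y).symm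
    rw [hysum]
    refine sum_mem fun p hp => Algebra.subset_adjoin ?_
    rw [hT]
    exact Finset.mem_coe.mpr (Finset.mem_biUnion.mpr ⟨y, hy, Finset.mem_image.mpr ⟨p, hp, rfl⟩⟩)
  exact ⟨_, aux_main 𝒜 deg hdegfn hdeg T.card xx hhom hadj D⟩
end

section
/- Let B be an integral domain of characteristic zero, S ⊆ B \ {0} a multiplicative set, G a totally ordered abelian group, and let deg : B → G ∪ {−∞} and DEG : S⁻¹B → G ∪ {−∞} be degree functions such that deg is the restriction of DEG. Let D : B → B be a derivation and S⁻¹D : S⁻¹B → S⁻¹B its unique extension to the localization. Then deg(D) is defined if and only if DEG(S⁻¹D) is defined, and if both are defined then deg(D) = DEG(S⁻¹D). -/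
section AuxLemmas

variable {B : Type*} [CommRing B] {G : Type*} [AddCommGroup G] [LinearOrder G] [IsOrderedAddMonoid G]

lemma aux_deg_one (deg : B → WithBot G) (h : IsDegreeFunction deg) (h1 : (1:B) ≠ 0) :
    deg 1 = 0 := by
  have hne : deg (1:B) ≠ ⊥ := fun hb => h1 ((h.1 1).mp hb)
  obtain ⟨a, ha⟩ := WithBot.ne_bot_iff_exists.mp hne
  have h2 : deg ((1:B) * 1) = deg 1 + deg 1 := h.2.1 1 1
  rw [one_mul, ← ha, ← WithBot.coe_add, WithBot.coe_inj] at h2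
  have : a = 0 := left_eq_add.mp h2
  rw [← ha, this]; rfl

lemma aux_deg_neg (deg : B → WithBot G) (h : IsDegreeFunction deg) (h1 : (1:B) ≠ 0)
    (x : B) : deg (-x) = deg x := by
  have hm1 : deg (-1 : B) = 0 := by
    have hne : deg (-1:B) ≠ ⊥ := fun hb => h1 (neg_eq_zero.mp ((h.1 _).mp hb))
    obtain ⟨a, ha⟩ := WithBot.ne_bot_iff_exists.mp hne
    have h2 : deg ((-1:B) * (-1)) = deg (-1) + deg (-1) := h.2.1 _ _
    rw [neg_one_mul, neg_neg, aux_deg_one deg h h1, ← ha, ← WithBot.coe_add] at h2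
    have h3 : a + a = (0:G) := by exact_mod_cast h2.symm
    have : a = 0 := by
      rcases lt_trichotomy a 0 with hlt | h0 | hgt
      · have := add_lt_add hlt hlt
        rw [add_zero] at this
        exact absurd h3 (ne_of_lt this)
      · exact h0
      · have := add_lt_add hgt hgt
        rw [add_zero] at this
        exact absurd h3 (ne_of_gt this)
    rw [← ha, this]; rfl
  calc deg (-x) = deg ((-1) * x) := by rw [neg_one_mul]
    _ = deg (-1) + deg x := h.2.1 _ _
    _ = deg x := by rw [hm1, zero_add]

lemma aux_deg_sub (deg : B → WithBot G) (h : IsDegreeFunction deg) (h1 : (1:B) ≠ 0)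
    (x y : B) : deg (x - y) ≤ max (deg x) (deg y) := by
  have := h.2.2 x (-y)
  rwa [← sub_eq_add_neg, aux_deg_neg deg h h1] at this

lemma aux_map_sub (w : WithBot G) (g : G) :
    w.map (fun a => a - g) = w + ↑(-g) := by
  cases w with
  | bot => rfl
  | coe a => simp [sub_eq_add_neg, ← WithBot.coe_add]

lemma aux_greatest_iff {α : Type*} [LinearOrder α] {A A' : Set α}
    (h1 : A ⊆ A') (h2 : ∀ m ∈ A', ∃ n ∈ A, m ≤ n) :
    ∀ M, IsGreatest A M ↔ IsGreatest A' M := by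
  intro M
  constructor
  · rintro ⟨hM, hub⟩
    refine ⟨h1 hM, fun m hm => ?_⟩
    obtain ⟨n, hn, hmn⟩ := h2 m hm
    exact hmn.trans (hub hn)
  · rintro ⟨hM, hub⟩
    obtain ⟨n, hnA, hMn⟩ := h2 M hM
    have hnM : n = M := le_antisymm (hub (h1 hnA)) hMn
    exact ⟨hnM ▸ hnA, fun m hm => hub (h1 hm)⟩

end AuxLemmas

lemma aux_final {G : Type*} [AddCommGroup G] [LinearOrder G] [IsOrderedAddMonoid G] (ξ σ : G) (w u v : WithBot G)
    (hkey : ↑σ + w ≤ max u (↑ξ + v)) :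
    w + ↑(-ξ) ≤ max (u + ↑(-(ξ + σ))) (v + ↑(-σ)) := by
  have key1 : ∀ δ du : G, σ + δ ≤ du → δ + -ξ ≤ du + -(ξ + σ) := by
    intro δ du h
    calc δ + -ξ = (σ + δ) + (-(ξ + σ)) := by abel
      _ ≤ du + -(ξ + σ) := add_le_add_left h _
  have key2 : ∀ δ dv : G, σ + δ ≤ ξ + dv → δ + -ξ ≤ dv + -σ := by
    intro δ dv h
    calc δ + -ξ = (σ + δ) + (-ξ + -σ) := by abel
      _ ≤ (ξ + dv) + (-ξ + -σ) := add_le_add_left h _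
      _ = dv + -σ := by abel
  cases w with
  | bot => simp
  | coe δ =>
    cases u with
    | bot =>
      cases v with
      | bot => simp [← WithBot.coe_add] at hkey
      | coe dv =>
        simp only [← WithBot.coe_add, WithBot.add_bot, WithBot.bot_add, max_bot_left,
          le_max_iff, le_bot_iff, WithBot.coe_ne_bot, false_or, or_false,
          WithBot.coe_le_coe] at hkey ⊢
        exact key2 δ dv hkey
    | coe du =>
      cases v with
      | bot =>
        simp only [← WithBot.coe_add, WithBot.add_bot, WithBot.bot_add, max_bot_left,
          le_max_iff, le_bot_iff, WithBot.coe_ne_bot, false_or, or_false,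
          WithBot.coe_le_coe] at hkey ⊢
        exact key1 δ du hkey
      | coe dv =>
        simp only [← WithBot.coe_add, le_max_iff, WithBot.coe_le_coe] at hkey ⊢
        rcases hkey with h | h
        · exact Or.inl (key1 δ du h)
        · exact Or.inr (key2 δ dv h)

theorem stmt14 {B B' G : Type*} [CommRing B] [IsDomain B] [CharZero B]
    [CommRing B'] [Algebra B B']
    (S : Submonoid B) (hS : (0 : B) ∉ S) [IsLocalization S B']
    [AddCommGroup G] [LinearOrder G] [IsOrderedAddMonoid G]
    (deg : B → WithBot G) (hdeg : IsDegreeFunction deg)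
    (DEG : B' → WithBot G) (hDEG : IsDegreeFunction DEG)
    (hres : ∀ b : B, deg b = DEG (algebraMap B B' b))
    -- D is a derivation of B
    (D : B → B)
    (hDadd : ∀ x y : B, D (x + y) = D x + D y)
    (hDmul : ∀ x y : B, D (x * y) = x * D y + y * D x)
    -- D' is its (unique) extension to the localization S⁻¹B
    (D' : B' → B')
    (hD'add : ∀ x y : B', D' (x + y) = D' x + D' y)
    (hD'mul : ∀ x y : B', D' (x * y) = x * D' y + y * D' x)
    (hext : ∀ b : B, D' (algebraMap B B' b) = algebraMap B B' (D b)) :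
    ((∃ M, IsGreatest (degDeltaSet deg D) M) ↔
      (∃ M, IsGreatest (degDeltaSet DEG D') M)) ∧
    (∀ M M', IsGreatest (degDeltaSet deg D) M →
      IsGreatest (degDeltaSet DEG D') M' → M = M') := by
  -- 1 ≠ 0 in B'
  have h1B : (1 : B) ≠ 0 := one_ne_zero
  have h1' : (1 : B') ≠ 0 := by
    intro hc
    have : deg (1 : B) = ⊥ := by
      rw [hres, map_one, hc]
      exact (hDEG.1 0).mpr rfl
    exact h1B ((hdeg.1 1).mp this)
  -- subset
  have hsub : degDeltaSet deg D ⊆ degDeltaSet DEG D' := by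
    rintro m ⟨b, hb0, rfl⟩
    refine ⟨algebraMap B B' b, ?_, ?_⟩
    · intro hc
      apply hb0
      apply (hdeg.1 b).mp
      rw [hres, hc]
      exact (hDEG.1 0).mpr rfl
    · unfold degDelta
      rw [hext, ← hres, ← hres]
  -- domination
  have hdom : ∀ m ∈ degDeltaSet DEG D', ∃ n ∈ degDeltaSet deg D, m ≤ n := by
    rintro m ⟨x, hx0, rfl⟩
    obtain ⟨⟨b, s⟩, hbs⟩ := IsLocalization.surj S x
    simp only at hbs
    have hs0 : (s : B) ≠ 0 := fun h => hS (h ▸ s.2)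
    have hxne : DEG x ≠ ⊥ := fun h => hx0 ((hDEG.1 x).mp h)
    have hsne : deg (s : B) ≠ ⊥ := fun h => hs0 ((hdeg.1 _).mp h)
    obtain ⟨ξ, hξ⟩ := WithBot.ne_bot_iff_exists.mp hxne
    obtain ⟨σ, hσ⟩ := WithBot.ne_bot_iff_exists.mp hsne
    have hdegb : deg b = ↑(ξ + σ) := by
      rw [hres, ← hbs, hDEG.2.1, ← hξ, ← hres, ← hσ, ← WithBot.coe_add]
    have hb0 : b ≠ 0 := by
      intro hc
      rw [hc, (hdeg.1 0).mpr rfl] at hdegb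
      exact (WithBot.bot_ne_coe) hdegb
    -- derivation equation
    have hD'eq : algebraMap B B' (s : B) * D' x
        = algebraMap B B' (D b) - x * algebraMap B B' (D (s : B)) := by
      have h1 := hD'mul x (algebraMap B B' (s : B))
      rw [hbs, hext, hext] at h1
      rw [eq_sub_iff_add_eq, add_comm]
      exact h1.symm
    -- key inequality
    have hkey : (↑σ : WithBot G) + DEG (D' x)
        ≤ max (deg (D b)) (↑ξ + deg (D (s : B))) := by
      have h2 : DEG (algebraMap B B' (s : B) * D' x)
          ≤ max (DEG (algebraMap B B' (D b))) (DEG (x * algebraMap B B' (D (s : B)))) := by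
        rw [hD'eq]
        exact aux_deg_sub DEG hDEG h1' _ _
      rwa [hDEG.2.1, hDEG.2.1, ← hres, ← hres, ← hres, ← hσ, ← hξ] at h2
    refine ⟨max (degDelta deg D b) (degDelta deg D (s : B)), ?_, ?_⟩
    · rcases max_cases (degDelta deg D b) (degDelta deg D (s : B)) with ⟨h, _⟩ | ⟨h, _⟩
      · rw [h]; exact ⟨b, hb0, rfl⟩
      · rw [h]; exact ⟨(s : B), hs0, rfl⟩
    · -- the degree comparison
      have e0 : degDelta DEG D' x = DEG (D' x) + ↑(-ξ) := by
        rw [degDelta, aux_map_sub, ← hξ, WithBot.unbotD_coe]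
      have e1 : degDelta deg D b = deg (D b) + ↑(-(ξ + σ)) := by
        rw [degDelta, aux_map_sub, hdegb, WithBot.unbotD_coe]
      have e2 : degDelta deg D (s : B) = deg (D (s : B)) + ↑(-σ) := by
        rw [degDelta, aux_map_sub, ← hσ, WithBot.unbotD_coe]
      rw [e0, e1, e2]
      exact aux_final ξ σ _ _ _ hkey
  constructor
  · exact exists_congr (aux_greatest_iff hsub hdom)
  · intro M M' hM hM'
    exact IsGreatest.unique ((aux_greatest_iff hsub hdom M).mp hM) hM'
end

section
/- Let B be an integral domain of finite transcendence degree over a field k of characteristic zero, G a totally ordered abelian group, and deg : B → G ∪ {−∞} a degree function such that the set {deg(x) : x ∈ B \ {0}} is a well-ordered subset of G; then deg(x) ≥ 0 for all nonzero x ∈ B and Z = {x ∈ B : deg(x) ≤ 0} is a subring of B on which deg vanishes on nonzero elements. Suppose z₁, …, z_m ∈ Z are such that Z is algebraic over k[z₁, …, z_m], and suppose there exist nonzero x₁, …, x_n ∈ B with the following property (which expresses that the associated graded ring of (B, deg) equals Z[gr(x₁), …, gr(x_n)]): for every nonzero b ∈ B there exists e ∈ B which is a finite Z-linear combination of monomials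 x₁^{e₁}⋯x_n^{e_n} with e₁·deg(x₁) + ⋯ + e_n·deg(x_n) = deg(b) for each monomial occurring with nonzero coefficient, and deg(b − e) < deg(b). Then B = Z[x₁, …, x_n], deg is tame over k, and for every k-derivation D : B → B, deg(D) is defined and deg(D) = max{δ_D(z₁), …, δ_D(z_m), δ_D(x₁), …, δ_D(x_n)}. -/
section Aux

variable {B : Type*} [CommRing B] [IsDomain B] {G : Type*} [AddCommGroup G] [LinearOrder G] [IsOrderedAddMonoid G]
  {deg : B → WithBot G}

private theorem coe_nsmul_aux (nn : ℕ) (g : G) :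
    ((nn • g : G) : WithBot G) = nn • (g : WithBot G) := by
  induction nn with
  | zero => simp
  | succ nn ih => rw [succ_nsmul, succ_nsmul, WithBot.coe_add, ih]

private theorem deg_one_aux (hbot : ∀ x : B, deg x = ⊥ ↔ x = 0)
    (hmul : ∀ x y : B, deg (x * y) = deg x + deg y) : deg (1 : B) = 0 := by
  have h := hmul 1 1
  rw [mul_one] at h
  cases hd : deg (1 : B) with
  | bot => exact absurd ((hbot 1).1 hd) one_ne_zero
  | coe g =>
    rw [hd, ← WithBot.coe_add] at h
    have hg : g = g + g := WithBot.coe_inj.1 h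
    have hg' : g + 0 = g + g := by rw [add_zero]; exact hg
    have : g = 0 := (add_left_cancel hg').symm
    rw [this]
    rfl

private theorem deg_neg_aux (hbot : ∀ x : B, deg x = ⊥ ↔ x = 0)
    (hmul : ∀ x y : B, deg (x * y) = deg x + deg y) (y : B) : deg (-y) = deg y := by
  have hne : deg (-1 : B) ≠ ⊥ := by
    rw [Ne, hbot]
    exact neg_ne_zero.2 one_ne_zero
  have h : deg (-1 : B) + deg (-1 : B) = 0 := by
    rw [← hmul, neg_one_mul, neg_neg, deg_one_aux hbot hmul]
  have h1 : deg (-1 : B) = 0 := by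
    cases hd : deg (-1 : B) with
    | bot => exact absurd hd hne
    | coe g =>
      rw [hd, ← WithBot.coe_add, ← WithBot.coe_zero] at h
      have hg : g + g = 0 := WithBot.coe_inj.1 h
      have : g = 0 := by
        rcases lt_trichotomy g 0 with h2 | h2 | h2
        · have h3 := add_lt_add h2 h2
          rw [add_zero, hg] at h3
          exact absurd h3 (lt_irrefl 0)
        · exact h2
        · have h3 := add_lt_add h2 h2
          rw [add_zero, hg] at h3
          exact absurd h3 (lt_irrefl 0)
      rw [this, WithBot.coe_zero]
  rw [show -y = -1 * y by ring, hmul, h1, zero_add]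

private theorem deg_pow_aux (hbot : ∀ x : B, deg x = ⊥ ↔ x = 0)
    (hmul : ∀ x y : B, deg (x * y) = deg x + deg y) (a : B) (j : ℕ) :
    deg (a ^ j) = j • deg a := by
  induction j with
  | zero => rw [pow_zero, deg_one_aux hbot hmul, zero_nsmul]
  | succ j ih => rw [pow_succ, hmul, ih, succ_nsmul]

private theorem deg_prod_aux (hbot : ∀ x : B, deg x = ⊥ ↔ x = 0)
    (hmul : ∀ x y : B, deg (x * y) = deg x + deg y)
    {ι : Type*} (s : Finset ι) (f : ι → B) :
    deg (∏ i ∈ s, f i) = ∑ i ∈ s, deg (f i) := by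
  induction s using Finset.cons_induction with
  | empty => rw [Finset.prod_empty, Finset.sum_empty, deg_one_aux hbot hmul]
  | cons a s ha ih => rw [Finset.prod_cons, Finset.sum_cons, hmul, ih]

private theorem deg_sum_le_aux (hbot : ∀ x : B, deg x = ⊥ ↔ x = 0)
    (hadd : ∀ x y : B, deg (x + y) ≤ max (deg x) (deg y))
    {ι : Type*} (s : Finset ι) (f : ι → B) (t : WithBot G)
    (h : ∀ i ∈ s, deg (f i) ≤ t) : deg (∑ i ∈ s, f i) ≤ t := by
  induction s using Finset.cons_induction with
  | empty =>
    rw [Finset.sum_empty, (hbot 0).2 rfl]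
    exact bot_le
  | cons a s ha ih =>
    rw [Finset.sum_cons]
    exact le_trans (hadd _ _)
      (max_le (h a (Finset.mem_cons_self a s)) (ih fun i hi => h i (Finset.mem_cons_of_mem hi)))

private theorem deg_nonneg_aux (hbot : ∀ x : B, deg x = ⊥ ↔ x = 0)
    (hmul : ∀ x y : B, deg (x * y) = deg x + deg y)
    (hwo : Set.IsWF {g : G | ∃ x : B, x ≠ 0 ∧ deg x = ↑g}) :
    ∀ b : B, b ≠ 0 → 0 ≤ deg b := by
  intro b hb
  by_contra hl
  rw [not_le] at hl
  obtain ⟨g, hg⟩ : ∃ g : G, deg b = ↑g := by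
    cases hd : deg b with
    | bot => exact absurd ((hbot b).1 hd) hb
    | coe g => exact ⟨g, rfl⟩
  rw [hg, ← WithBot.coe_zero] at hl
  have hgneg : g < 0 := WithBot.coe_lt_coe.1 hl
  have hanti : StrictAnti (fun nn : ℕ => (nn + 1) • g) := by
    apply strictAnti_nat_of_succ_lt
    intro nn
    have : (nn + 1 + 1) • g = (nn + 1) • g + g := succ_nsmul g (nn + 1)
    rw [this]
    calc (nn + 1) • g + g < (nn + 1) • g + 0 := add_lt_add_right hgneg _
    _ = (nn + 1) • g := add_zero _
  refine Set.isWF_iff_no_descending_seq.1 hwo _ hanti fun nn => ?_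
  show ∃ xx : B, xx ≠ 0 ∧ deg xx = ↑((nn + 1) • g)
  exact ⟨b ^ (nn + 1), pow_ne_zero _ hb, by
    rw [deg_pow_aux hbot hmul, hg, ← coe_nsmul_aux]⟩

private theorem deg_wf_aux (hbot : ∀ x : B, deg x = ⊥ ↔ x = 0)
    (hwo : Set.IsWF {g : G | ∃ x : B, x ≠ 0 ∧ deg x = ↑g}) :
    WellFounded (fun a b : B => deg a < deg b) := by
  have h1 : (Set.range deg).IsWF := by
    rw [Set.isWF_iff_no_descending_seq]
    intro f hf hmem
    have hne : ∀ nn : ℕ, f nn ≠ ⊥ := by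
      intro nn h
      have hlt := hf (Nat.lt_succ_self nn)
      rw [h] at hlt
      exact absurd hlt (by simp)
    choose g hg using fun nn => WithBot.ne_bot_iff_exists.1 (hne nn)
    refine Set.isWF_iff_no_descending_seq.1 hwo g ?_ fun nn => ?_
    · intro a b hab
      have := hf hab
      rw [← hg a, ← hg b] at this
      exact WithBot.coe_lt_coe.1 this
    · obtain ⟨xb, hxb⟩ := hmem nn
      have hb2 : deg xb = ↑(g nn) := by rw [hxb]; exact (hg nn).symm
      refine ⟨xb, ?_, hb2⟩
      intro h0
      rw [(hbot xb).2 h0] at hb2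
      exact WithBot.bot_ne_coe hb2
  exact Set.wellFoundedOn_range.1 h1

end Aux

theorem stmt18 {k B G : Type*} [Field k] [CharZero k] [CommRing B] [IsDomain B]
    [Algebra k B] [AddCommGroup G] [LinearOrder G] [IsOrderedAddMonoid G]
    -- B has finite transcendence degree over k
    (htrdeg : ∃ (N : ℕ) (w : Fin N → B), ∀ b : B,
      IsAlgebraic (↥(Algebra.adjoin k (Set.range w))) b)
    (deg : B → WithBot G) (hdegfn : IsDegreeFunction deg)
    -- the set of values of deg on B \ {0} is well-ordered
    (hwo : Set.IsWF {g : G | ∃ x : B, x ≠ 0 ∧ deg x = ↑g})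
    -- z₁,…,z_m ∈ Z = {x | deg x ≤ 0} with Z algebraic over k[z₁,…,z_m]
    (m : ℕ) (z : Fin m → B) (hz : ∀ j, deg (z j) ≤ 0)
    (halg : ∀ b : B, deg b ≤ 0 →
      IsAlgebraic (↥(Algebra.adjoin k (Set.range z))) b)
    (n : ℕ) (x : Fin n → B) (hx0 : ∀ i, x i ≠ 0)
    -- Gr(B) = Z[gr(x₁),…,gr(xₙ)]:
    (hgr : ∀ b : B, b ≠ 0 → ∃ e ∈ AddSubmonoid.closure
        {w : B | ∃ c : B, deg c ≤ 0 ∧ ∃ v : Fin n → ℕ,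
          w = c * ∏ i : Fin n, x i ^ v i ∧
          (∑ i : Fin n, v i • deg (x i)) = deg b},
      deg (b - e) < deg b) :
    -- deg takes values in nonnegative degrees
    (∀ b : B, b ≠ 0 → 0 ≤ deg b) ∧
    -- B = Z[x₁,…,xₙ]
    Subring.closure ({b : B | deg b ≤ 0} ∪ Set.range x) = ⊤ ∧
    -- deg is tame over k, with deg(D) = max {δ_D(zⱼ), δ_D(xᵢ)}
    (∀ D : Derivation k B B, DegreeDefinedAt deg ⇑D) ∧
    (∀ D : Derivation k B B,
      IsGreatest (degDeltaSet deg ⇑D)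
        ((Finset.univ.sup fun j => degDelta deg ⇑D (z j)) ⊔
          (Finset.univ.sup fun i => degDelta deg ⇑D (x i)))) := by
  classical
  obtain ⟨hbot, hmul, hadd⟩ := hdegfn
  have deg0 : deg (0 : B) = ⊥ := (hbot 0).2 rfl
  have hone : deg (1 : B) = 0 := deg_one_aux hbot hmul
  have hnonneg : ∀ b : B, b ≠ 0 → 0 ≤ deg b := deg_nonneg_aux hbot hmul hwo
  have hdegz : ∀ c : B, c ≠ 0 → deg c ≤ 0 → deg c = 0 :=
    fun c hc h => le_antisymm h (hnonneg c hc)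
  have hwf : WellFounded (fun a b : B => deg a < deg b) := deg_wf_aux hbot hwo
  -- degree of scalars
  have hscalar : ∀ r : k, deg (algebraMap k B r) ≤ 0 := by
    intro r
    by_cases hr : r = 0
    · rw [hr, map_zero, deg0]; exact bot_le
    · have h1 : algebraMap k B r * algebraMap k B r⁻¹ = 1 := by
        rw [← map_mul, mul_inv_cancel₀ hr, map_one]
      have h2 := hmul (algebraMap k B r) (algebraMap k B r⁻¹)
      rw [h1, hone] at h2
      have hne1 : algebraMap k B r ≠ 0 := fun h =>
        hr ((algebraMap k B).injective (by rw [h, map_zero]))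
      have hne2 : algebraMap k B r⁻¹ ≠ 0 := fun h =>
        (inv_ne_zero hr) ((algebraMap k B).injective (by rw [h, map_zero]))
      calc deg (algebraMap k B r) = deg (algebraMap k B r) + 0 := (add_zero _).symm
        _ ≤ deg (algebraMap k B r) + deg (algebraMap k B r⁻¹) :=
            add_le_add_right (hnonneg _ hne2) _
        _ = 0 := h2.symm
  have hdegnat : ∀ i : ℕ, deg ((i : B)) ≤ 0 := by
    intro i
    have h1 : algebraMap k B ((i : ℕ) : k) = ((i : ℕ) : B) := map_natCast (algebraMap k B) i
    rw [← h1]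
    exact hscalar _
  -- Part 2 : B = Z[x]
  have hclosure' : ∀ b : B, b ∈ Subring.closure ({b : B | deg b ≤ 0} ∪ Set.range x) := by
    intro b
    induction b using hwf.induction with
    | _ b IH =>
      by_cases hb : b = 0
      · rw [hb]; exact zero_mem _
      obtain ⟨e, he, hlt⟩ := hgr b hb
      have hesub : e ∈ Subring.closure ({b : B | deg b ≤ 0} ∪ Set.range x) := by
        refine AddSubmonoid.closure_induction
          (motive := fun w _ => w ∈ Subring.closure ({b : B | deg b ≤ 0} ∪ Set.range x))
          ?_ (zero_mem _) (fun _ _ _ _ h1 h2 => add_mem h1 h2) he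
        rintro w ⟨c, hc, v, rfl, hv⟩
        show c * (∏ i : Fin n, x i ^ v i) ∈ Subring.closure ({b : B | deg b ≤ 0} ∪ Set.range x)
        refine mul_mem (Subring.subset_closure (Set.mem_union_left _ hc))
          (prod_mem fun i _ => pow_mem (Subring.subset_closure (Set.mem_union_right _ (Set.mem_range_self i))) _)
      have h1 : b - e ∈ Subring.closure ({b : B | deg b ≤ 0} ∪ Set.range x) := IH _ hlt
      have hbe : b = (b - e) + e := by ring
      rw [hbe]
      exact add_mem h1 hesub
  have hclosure : Subring.closure ({b : B | deg b ≤ 0} ∪ Set.range x) = ⊤ := by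
    rw [eq_top_iff]
    exact fun b _ => hclosure' b
  have hgreat : ∀ D : Derivation k B B,
      IsGreatest (degDeltaSet deg ⇑D)
        ((Finset.univ.sup fun j => degDelta deg ⇑D (z j)) ⊔
          (Finset.univ.sup fun i => degDelta deg ⇑D (x i))) := by
    intro D
    set Mz := Finset.univ.sup fun j => degDelta deg ⇑D (z j) with hMz
    set Mx := Finset.univ.sup fun i => degDelta deg ⇑D (x i) with hMx
    set M := Mz ⊔ Mx with hM
    have hMzle : ∀ j, degDelta deg (⇑D) (z j) ≤ Mz := fun j => by
      rw [hMz]; exact Finset.le_sup (f := fun j => degDelta deg (⇑D) (z j)) (Finset.mem_univ j)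
    have hMxle : ∀ i, degDelta deg (⇑D) (x i) ≤ Mx := fun i => by
      rw [hMx]; exact Finset.le_sup (f := fun i => degDelta deg (⇑D) (x i)) (Finset.mem_univ i)
    have hMzM : Mz ≤ M := by rw [hM]; exact le_sup_left
    have hMxM : Mx ≤ M := by rw [hM]; exact le_sup_right
    -- basic translation lemmas
    have hdelta_bound : ∀ (a : B) (t : WithBot G), a ≠ 0 → degDelta deg (⇑D) a ≤ t →
        deg (D a) ≤ t + deg a := by
      intro a t ha hle
      obtain ⟨g, hg⟩ : ∃ g : G, deg a = ↑g := by
        cases hd : deg a with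
        | bot => exact absurd ((hbot a).1 hd) ha
        | coe g => exact ⟨g, rfl⟩
      cases hDa : deg (D a) with
      | bot => exact bot_le
      | coe h =>
        have hdel : degDelta deg (⇑D) a = ↑(h - g) := by
          rw [degDelta, hDa, hg, WithBot.map_coe, WithBot.unbotD_coe]
        rw [hdel] at hle
        rw [hg]
        calc (↑h : WithBot G) = ↑(h - g) + ↑g := by
              rw [← WithBot.coe_add, sub_add_cancel]
        _ ≤ t + ↑g := add_le_add_left hle _
    have hdelta_of_bound : ∀ a : B, a ≠ 0 → deg (D a) ≤ M + deg a →
        degDelta deg (⇑D) a ≤ M := by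
      intro a ha hle
      obtain ⟨g, hg⟩ : ∃ g : G, deg a = ↑g := by
        cases hd : deg a with
        | bot => exact absurd ((hbot a).1 hd) ha
        | coe g => exact ⟨g, rfl⟩
      cases hDa : deg (D a) with
      | bot =>
        rw [degDelta, hDa, WithBot.map_bot]
        exact bot_le
      | coe h =>
        rw [degDelta, hDa, hg, WithBot.map_coe, WithBot.unbotD_coe]
        rw [hDa, hg] at hle
        cases hMc : M with
        | bot =>
          rw [hMc, WithBot.bot_add] at hle
          exact absurd hle (by simp)
        | coe mm =>
          rw [hMc, ← WithBot.coe_add] at hle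
          exact WithBot.coe_le_coe.2 (sub_le_iff_le_add.2 (WithBot.coe_le_coe.1 hle))
    -- deg (D (z j)) ≤ Mz
    have hMz_z : ∀ j, deg (D (z j)) ≤ Mz := by
      intro j
      by_cases hzj : z j = 0
      · rw [hzj, map_zero, deg0]; exact bot_le
      · have h0 : deg (z j) = 0 := hdegz _ hzj (hz j)
        have := hdelta_bound (z j) (degDelta deg (⇑D) (z j)) hzj le_rfl
        rw [h0, add_zero] at this
        exact le_trans this (hMzle j)
    -- adjoin bound
    have hadjoin : ∀ a ∈ Algebra.adjoin k (Set.range z), deg a ≤ 0 ∧ deg (D a) ≤ Mz := by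
      intro a ha
      induction ha using Algebra.adjoin_induction with
      | mem w hw =>
        obtain ⟨j, rfl⟩ := hw
        exact ⟨hz j, hMz_z j⟩
      | algebraMap r =>
        refine ⟨hscalar r, ?_⟩
        rw [Derivation.map_algebraMap, deg0]
        exact bot_le
      | add u v hu hv ihu ihv =>
        refine ⟨le_trans (hadd u v) (max_le ihu.1 ihv.1), ?_⟩
        rw [map_add]
        exact le_trans (hadd _ _) (max_le ihu.2 ihv.2)
      | mul u v hu hv ihu ihv =>
        constructor
        · rw [hmul]
          calc deg u + deg v ≤ 0 + 0 := add_le_add ihu.1 ihv.1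
          _ = 0 := add_zero _
        · rw [Derivation.leibniz, smul_eq_mul, smul_eq_mul]
          refine le_trans (hadd _ _) (max_le ?_ ?_)
          · rw [hmul]
            calc deg u + deg (D v) ≤ 0 + Mz := add_le_add ihu.1 ihv.2
            _ = Mz := zero_add _
          · rw [hmul]
            calc deg v + deg (D u) ≤ 0 + Mz := add_le_add ihv.1 ihu.2
            _ = Mz := zero_add _
    -- key lemma on Z
    have hkeyZ : ∀ c : B, deg c ≤ 0 → deg (D c) ≤ Mz := by
      intro c hc
      by_cases hc0 : c = 0
      · rw [hc0, map_zero, deg0]; exact bot_le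
      have hcdeg : deg c = 0 := hdegz c hc0 hc
      have hcpow : ∀ i : ℕ, deg (c ^ i) = 0 := by
        intro i
        rw [deg_pow_aux hbot hmul, hcdeg]
        exact smul_zero i
      obtain ⟨p0, hp0ne, hp0c⟩ := halg c hc
      have halgmap : ∀ a : ↥(Algebra.adjoin k (Set.range z)),
          algebraMap (↥(Algebra.adjoin k (Set.range z))) B a = (a : B) := fun a => rfl
      have hex : ∃ nn : ℕ, ∃ q : Polynomial ↥(Algebra.adjoin k (Set.range z)),
          q ≠ 0 ∧ Polynomial.aeval c q = 0 ∧ q.natDegree = nn :=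
        ⟨p0.natDegree, p0, hp0ne, hp0c, rfl⟩
      obtain ⟨q, hq0, hqc, hqdeg⟩ := Nat.find_spec hex
      set N := Nat.find hex with hN
      have hmin : ∀ q' : Polynomial ↥(Algebra.adjoin k (Set.range z)),
          q' ≠ 0 → Polynomial.aeval c q' = 0 → N ≤ q'.natDegree :=
        fun q' h1 h2 => Nat.find_min' hex ⟨q', h1, h2, rfl⟩
      have hN1 : 1 ≤ N := by
        by_contra hcon
        have hN0 : q.natDegree = 0 := by omega
        obtain ⟨a, ha⟩ := Polynomial.natDegree_eq_zero.1 hN0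
        rw [← ha, Polynomial.aeval_C, halgmap] at hqc
        have ha0 : a = 0 := Subtype.ext hqc
        rw [ha0, map_zero] at ha
        exact hq0 ha.symm
      haveI : CharZero B := charZero_of_injective_algebraMap (algebraMap k B).injective
      have hqderiv_ne : Polynomial.derivative q ≠ 0 := by
        intro hder
        have h1 : q.coeff N ≠ 0 := by
          rw [← hqdeg]
          exact Polynomial.leadingCoeff_ne_zero.2 hq0
        have h2 := Polynomial.coeff_derivative q (N - 1)
        rw [hder, Polynomial.coeff_zero] at h2
        have h3 : N - 1 + 1 = N := by omega
        rw [h3] at h2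
        have h4 := congrArg (Subtype.val) h2.symm
        push_cast at h4
        rcases mul_eq_zero.1 h4 with h5 | h5
        · exact h1 (Subtype.ext h5)
        · exact_mod_cast h5
      have hqderiv_val : Polynomial.aeval c (Polynomial.derivative q) ≠ 0 := by
        intro hval
        have h1 := hmin _ hqderiv_ne hval
        have h2 := Polynomial.natDegree_derivative_lt (p := q) (by omega)
        omega
      -- rewrite aeval c q as explicit sum
      have h0 : Polynomial.aeval c q = ∑ i ∈ Finset.range (N + 1), (q.coeff i : B) * c ^ i := by
        rw [Polynomial.aeval_eq_sum_range, hqdeg]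
        exact Finset.sum_congr rfl fun i _ => by rw [Algebra.smul_def, halgmap]
      have hder_eval : Polynomial.aeval c (Polynomial.derivative q)
          = ∑ i ∈ Finset.range (N + 1), (i : B) * (q.coeff i : B) * c ^ (i - 1) := by
        have hlt : (Polynomial.derivative q).natDegree < N := by
          have := Polynomial.natDegree_derivative_lt (p := q) (by omega)
          omega
        rw [Polynomial.aeval_eq_sum_range' hlt,
          Finset.sum_range_succ' (fun i => (i : B) * (q.coeff i : B) * c ^ (i - 1)) N]
        have h00 : ((0 : ℕ) : B) * (q.coeff 0 : B) * c ^ (0 - 1) = 0 := by simp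
        rw [h00, add_zero]
        refine Finset.sum_congr rfl fun i _ => ?_
        rw [Polynomial.coeff_derivative, Algebra.smul_def, halgmap]
        simp only [Nat.add_sub_cancel]
        push_cast
        ring
      -- apply D
      have h1 : (∑ i ∈ Finset.range (N + 1), (i : B) * (q.coeff i : B) * c ^ (i - 1)) * D c
          + ∑ i ∈ Finset.range (N + 1), c ^ i * D ((q.coeff i : B)) = 0 := by
        have hD0 : D (∑ i ∈ Finset.range (N + 1), (q.coeff i : B) * c ^ i) = 0 := by
          rw [← h0, hqc, map_zero]
        rw [map_sum] at hD0
        have h2 : ∀ i ∈ Finset.range (N + 1), D ((q.coeff i : B) * c ^ i)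
            = ((i : B) * (q.coeff i : B) * c ^ (i - 1)) * D c + c ^ i * D ((q.coeff i : B)) := by
          intro i _
          rw [Derivation.leibniz, Derivation.leibniz_pow]
          simp only [smul_eq_mul, nsmul_eq_mul]
          ring
        rw [Finset.sum_congr rfl h2, Finset.sum_add_distrib, ← Finset.sum_mul] at hD0
        exact hD0
      have hid : Polynomial.aeval c (Polynomial.derivative q) * D c
          = - ∑ i ∈ Finset.range (N + 1), c ^ i * D ((q.coeff i : B)) := by
        rw [hder_eval]
        exact eq_neg_of_add_eq_zero_left h1
      -- degree bounds
      have hsum_le : deg (∑ i ∈ Finset.range (N + 1), c ^ i * D ((q.coeff i : B))) ≤ Mz := by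
        refine deg_sum_le_aux hbot hadd _ _ _ fun i _ => ?_
        rw [hmul, hcpow i, zero_add]
        exact (hadjoin _ (q.coeff i).2).2
      have haev0 : deg (Polynomial.aeval c (Polynomial.derivative q)) = 0 := by
        refine hdegz _ hqderiv_val ?_
        rw [hder_eval]
        refine deg_sum_le_aux hbot hadd _ _ _ fun i _ => ?_
        rw [hmul, hmul, hcpow]
        calc deg ((i : B)) + deg ((q.coeff i : B)) + 0
            ≤ 0 + 0 + 0 := add_le_add (add_le_add (hdegnat i) (hadjoin _ (q.coeff i).2).1) le_rfl
        _ = 0 := by simp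
      have hfinal : deg (Polynomial.aeval c (Polynomial.derivative q) * D c) ≤ Mz := by
        rw [hid, deg_neg_aux hbot hmul]
        exact hsum_le
      rw [hmul, haev0, zero_add] at hfinal
      exact hfinal
    -- bounds for generators
    have hxiM : ∀ i, deg (D (x i)) ≤ M + deg (x i) := fun i =>
      hdelta_bound (x i) M (hx0 i) (le_trans (hMxle i) hMxM)
    have hmulP : ∀ u v : B, deg (D u) ≤ M + deg u → deg (D v) ≤ M + deg v →
        deg (D (u * v)) ≤ M + deg (u * v) := by
      intro u v hu hv
      rw [Derivation.leibniz, smul_eq_mul, smul_eq_mul, hmul]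
      refine le_trans (hadd _ _) (max_le ?_ ?_)
      · rw [hmul]
        calc deg u + deg (D v) ≤ deg u + (M + deg v) := add_le_add_right hv _
        _ = M + (deg u + deg v) := by rw [← add_assoc, add_comm (deg u) M, add_assoc]
      · rw [hmul]
        calc deg v + deg (D u) ≤ deg v + (M + deg u) := add_le_add_right hu _
        _ = M + (deg u + deg v) := by
              rw [← add_assoc, add_comm (deg v) M, add_assoc, add_comm (deg v) (deg u)]
    -- main bound by well-founded induction
    have hmain : ∀ b : B, deg (D b) ≤ M + deg b := by
      intro b
      induction b using hwf.induction with
      | _ b IH =>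
        by_cases hb : b = 0
        · rw [hb, map_zero, deg0]; exact bot_le
        obtain ⟨e, he, hlt⟩ := hgr b hb
        have hmono : ∀ w ∈ {w : B | ∃ c : B, deg c ≤ 0 ∧ ∃ v : Fin n → ℕ,
            w = c * ∏ i : Fin n, x i ^ v i ∧
            (∑ i : Fin n, v i • deg (x i)) = deg b},
            deg w ≤ deg b ∧ deg (D w) ≤ M + deg b := by
          rintro w ⟨c, hc, v, rfl, hv⟩
          by_cases hc0 : c = 0
          · rw [hc0, zero_mul]
            rw [map_zero]
            exact ⟨by rw [deg0]; exact bot_le, by rw [deg0]; exact bot_le⟩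
          have hcdeg : deg c = 0 := hdegz c hc0 hc
          have hprodxdeg : deg (∏ i : Fin n, x i ^ v i) = deg b := by
            rw [deg_prod_aux hbot hmul]
            rw [← hv]
            exact Finset.sum_congr rfl fun i _ => deg_pow_aux hbot hmul _ _
          have hwdeg : deg (c * ∏ i : Fin n, x i ^ v i) = deg b := by
            rw [hmul, hcdeg, zero_add, hprodxdeg]
          refine ⟨le_of_eq hwdeg, ?_⟩
          have hDc : deg (D c) ≤ M + deg c := by
            rw [hcdeg, add_zero]
            exact le_trans (hkeyZ c hc) hMzM
          have hDprod : deg (D (∏ i : Fin n, x i ^ v i))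
              ≤ M + deg (∏ i : Fin n, x i ^ v i) := by
            refine Finset.prod_induction _ (fun w => deg (D w) ≤ M + deg w) hmulP ?_ ?_
            · show deg (D (1 : B)) ≤ M + deg (1 : B)
              rw [Derivation.map_one_eq_zero, deg0]
              exact bot_le
            · intro i _
              show deg (D (x i ^ v i)) ≤ M + deg (x i ^ v i)
              induction v i with
              | zero =>
                rw [pow_zero, Derivation.map_one_eq_zero, deg0]
                exact bot_le
              | succ nn ih =>
                rw [pow_succ]
                exact hmulP _ _ ih (hxiM i)
          have := hmulP c _ hDc hDprod
          rw [hwdeg] at this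
          exact this
        have hsum : deg e ≤ deg b ∧ deg (D e) ≤ M + deg b := by
          refine AddSubmonoid.closure_induction
            (motive := fun w _ => deg w ≤ deg b ∧ deg (D w) ≤ M + deg b)
            hmono ?_ ?_ he
          · refine ⟨?_, ?_⟩
            · show deg (0 : B) ≤ deg b
              rw [deg0]; exact bot_le
            · show deg (D (0 : B)) ≤ M + deg b
              rw [map_zero, deg0]; exact bot_le
          · intro u v _ _ hu hv
            refine ⟨le_trans (hadd u v) (max_le hu.1 hv.1), ?_⟩
            show deg (D (u + v)) ≤ M + deg b
            rw [map_add]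
            exact le_trans (hadd _ _) (max_le hu.2 hv.2)
        have h1 : deg (D (b - e)) ≤ M + deg b :=
          le_trans (IH _ hlt) (add_le_add_right hlt.le _)
        have hb_eq : D b = D (b - e) + D e := by
          rw [← map_add]
          congr 1
          ring
        rw [hb_eq]
        exact le_trans (hadd _ _) (max_le h1 hsum.2)
    -- M is an upper bound
    have hub : ∀ t ∈ degDeltaSet deg (⇑D), t ≤ M := by
      rintro t ⟨a, ha, rfl⟩
      exact hdelta_of_bound a ha (hmain a)
    -- M is attained
    have hbot_mem : (⊥ : WithBot G) ∈ degDeltaSet deg (⇑D) :=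
      ⟨1, one_ne_zero, by rw [degDelta, Derivation.map_one_eq_zero, deg0, WithBot.map_bot]⟩
    have hmem : M ∈ degDeltaSet deg (⇑D) := by
      rcases le_total Mz Mx with hc | hc
      · have hMeq : M = Mx := sup_eq_right.2 hc
        rcases Nat.eq_zero_or_pos n with hn | hn
        · have hbx : Mx = ⊥ := by
            subst hn
            rw [hMx, Finset.univ_eq_empty, Finset.sup_empty]
          rw [hMeq, hbx]
          exact hbot_mem
        · haveI : Nonempty (Fin n) := ⟨⟨0, hn⟩⟩
          obtain ⟨i, _, hi⟩ := Finset.exists_mem_eq_sup Finset.univ Finset.univ_nonempty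
            (fun i => degDelta deg (⇑D) (x i))
          rw [hMeq, hMx, hi]
          exact ⟨x i, hx0 i, rfl⟩
      · have hMeq : M = Mz := sup_eq_left.2 hc
        rcases Nat.eq_zero_or_pos m with hm | hm
        · have hbz : Mz = ⊥ := by
            subst hm
            rw [hMz, Finset.univ_eq_empty, Finset.sup_empty]
          rw [hMeq, hbz]
          exact hbot_mem
        · haveI : Nonempty (Fin m) := ⟨⟨0, hm⟩⟩
          obtain ⟨j, _, hj⟩ := Finset.exists_mem_eq_sup Finset.univ Finset.univ_nonempty
            (fun j => degDelta deg (⇑D) (z j))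
          by_cases hzj : z j = 0
          · have hdz : degDelta deg (⇑D) (z j) = ⊥ := by
              rw [degDelta, hzj, map_zero, deg0, WithBot.map_bot]
            rw [hMeq, hMz, hj, hdz]
            exact hbot_mem
          · rw [hMeq, hMz, hj]
            exact ⟨z j, hzj, rfl⟩
    exact ⟨hmem, hub⟩
  exact ⟨hnonneg, hclosure, fun D => ⟨_, hgreat D⟩, hgreat⟩
end
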